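/- Let n ≥ 1, 0 ≤ k ≤ n, and in Mat_{2n+2}(ℂ) set X_i = E_{1,i+1}+E_{i+1,n+i+1} for 1 ≤ i ≤ k, X_j = E_{1,j+1} for k < j ≤ n, Y_i = E_{1,n+i+1}+E_{n−i+2,2n+2} for 1 ≤ i ≤ n, and t = E_{1,2n+2}. Then these 2n+1 elements span a Lie subalgebra isomorphic to the Heisenberg Lie algebra h_{2n+1} (with [X_i,Y_i] = t, all other brackets of basis elements zero, and t central). -/

import Mathlib

set_option maxHeartbeats 1000000


open Matrix

/-- The matrix unit `E_{a,b}` of `Mat_{2n+2}(ℂ)` in 1-based indexing: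
the unique nonzero entry `1` sits at the (1-based) position `(a, b)`. -/
def Emat (n a b : ℕ) : Matrix (Fin (2 * n + 2)) (Fin (2 * n + 2)) ℂ :=
  fun p q => if (p : ℕ) + 1 = a ∧ (q : ℕ) + 1 = b then 1 else 0

/-- `X_i = E_{1,i+1} + E_{i+1,n+i+1}` for `1 ≤ i ≤ k`, `X_j = E_{1,j+1}` for `k < j ≤ n`. -/
def exX (n k i : ℕ) : Matrix (Fin (2 * n + 2)) (Fin (2 * n + 2)) ℂ :=
  if i ≤ k then Emat n 1 (i + 1) + Emat n (i + 1) (n + i + 1) else Emat n 1 (i + 1)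

/-- `Y_i = E_{1,n+i+1} + E_{n-i+2,2n+2}` for `1 ≤ i ≤ n`. -/
def exY (n i : ℕ) : Matrix (Fin (2 * n + 2)) (Fin (2 * n + 2)) ℂ :=
  Emat n 1 (n + i + 1) + Emat n (n - i + 2) (2 * n + 2)

/-- `t = E_{1,2n+2}`. -/
def exT (n : ℕ) : Matrix (Fin (2 * n + 2)) (Fin (2 * n + 2)) ℂ :=
  Emat n 1 (2 * n + 2)

lemma Emat_mul (n a b c d : ℕ) :
    Emat n a b * Emat n c d =
      if b = c ∧ 1 ≤ b ∧ b ≤ 2 * n + 2 then Emat n a d else 0 := by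
  ext p q
  simp only [Matrix.mul_apply, Emat, ite_mul, mul_ite, one_mul, mul_one, mul_zero, zero_mul]
  by_cases h : b = c ∧ 1 ≤ b ∧ b ≤ 2 * n + 2
  · obtain ⟨rfl, h1, h2⟩ := h
    rw [if_pos ⟨rfl, h1, h2⟩]
    rw [Finset.sum_eq_single (⟨b - 1, by omega⟩ : Fin (2 * n + 2))]
    · simp only [Emat]
      split_ifs with hA hB hC hC <;> first | rfl | (exfalso; (try simp only [Fin.val_mk] at *); omega)
    · intro r _ hr
      have hr' : (r : ℕ) + 1 ≠ b := fun hh => hr (Fin.ext (by simp only [Fin.val_mk]; omega))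
      split_ifs with hA hB <;> first | rfl | exact absurd hA.1 hr' | exact absurd hA.2 hr' | exact absurd hB.1 hr' | exact absurd hB.2 hr'
    · simp
  · rw [if_neg h]
    simp only [Matrix.zero_apply]
    apply Finset.sum_eq_zero
    intro r _
    split_ifs with hA hB
    · exact absurd ⟨by omega, by omega, by have := r.isLt; omega⟩ h
    · rfl
    · rfl




lemma brXY (n k i j : ℕ) (hi : 1 ≤ i) (hi' : i ≤ n) (hj : 1 ≤ j) (hj' : j ≤ n) :
    exX n k i * exY n j - exY n j * exX n k i = if i + j = n + 1 then exT n else 0 := by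
  unfold exX exY exT
  by_cases hik : i ≤ k <;>
    simp only [hik, ite_true, ite_false, if_pos, if_neg, not_false_iff, add_mul, mul_add,
      Emat_mul] <;>
    split_ifs <;> first
      | (exfalso; omega)
      | abel1
      | (ext p q;
         simp only [Emat, Matrix.add_apply, Matrix.sub_apply, Matrix.neg_apply,
           Matrix.smul_apply, Matrix.zero_apply, smul_eq_mul, neg_smul, one_smul];
         split_ifs <;> first | ring1 | (exfalso; omega))

lemma brXX (n k i j : ℕ) (hi : 1 ≤ i) (hi' : i ≤ n) (hj : 1 ≤ j) (hj' : j ≤ n) :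
    exX n k i * exX n k j - exX n k j * exX n k i = 0 := by
  unfold exX
  by_cases hik : i ≤ k <;> by_cases hjk : j ≤ k <;>
    simp only [hik, hjk, ite_true, ite_false, add_mul, mul_add, Emat_mul] <;>
    split_ifs <;> first
      | (exfalso; omega)
      | abel1
      | (ext p q;
         simp only [Emat, Matrix.add_apply, Matrix.sub_apply, Matrix.neg_apply,
           Matrix.smul_apply, Matrix.zero_apply, smul_eq_mul, neg_smul, one_smul];
         split_ifs <;> first | ring1 | (exfalso; omega))

lemma brYY (n i j : ℕ) (hi : 1 ≤ i) (hi' : i ≤ n) (hj : 1 ≤ j) (hj' : j ≤ n) :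
    exY n i * exY n j - exY n j * exY n i = 0 := by
  unfold exY
  simp only [add_mul, mul_add, Emat_mul]
  split_ifs <;> first
      | (exfalso; omega)
      | abel1
      | (ext p q;
         simp only [Emat, Matrix.add_apply, Matrix.sub_apply, Matrix.neg_apply,
           Matrix.smul_apply, Matrix.zero_apply, smul_eq_mul, neg_smul, one_smul];
         split_ifs <;> first | ring1 | (exfalso; omega))

lemma brXT (n k i : ℕ) (hi : 1 ≤ i) (hi' : i ≤ n) :
    exX n k i * exT n - exT n * exX n k i = 0 := by
  unfold exX exT
  by_cases hik : i ≤ k <;>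
    simp only [hik, ite_true, ite_false, add_mul, mul_add, Emat_mul] <;>
    split_ifs <;> first
      | (exfalso; omega)
      | abel1
      | (ext p q;
         simp only [Emat, Matrix.add_apply, Matrix.sub_apply, Matrix.neg_apply,
           Matrix.smul_apply, Matrix.zero_apply, smul_eq_mul, neg_smul, one_smul];
         split_ifs <;> first | ring1 | (exfalso; omega))

lemma brYT (n i : ℕ) (hi : 1 ≤ i) (hi' : i ≤ n) :
    exY n i * exT n - exT n * exY n i = 0 := by
  unfold exY exT
  simp only [add_mul, mul_add, Emat_mul]
  split_ifs <;> first
      | (exfalso; omega)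
      | abel1
      | (ext p q;
         simp only [Emat, Matrix.add_apply, Matrix.sub_apply, Matrix.neg_apply,
           Matrix.smul_apply, Matrix.zero_apply, smul_eq_mul, neg_smul, one_smul];
         split_ifs <;> first | ring1 | (exfalso; omega))

noncomputable def phiMat (n k : ℕ) :
    ((Fin n → ℂ) × (Fin n → ℂ) × ℂ) →ₗ[ℂ] Matrix (Fin (2 * n + 2)) (Fin (2 * n + 2)) ℂ where
  toFun v := (∑ i : Fin n, v.1 i • exX n k ((i : ℕ) + 1)) +
    (∑ i : Fin n, v.2.1 i • exY n (n - (i : ℕ))) + v.2.2 • exT n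
  map_add' u v := by
    simp only [Prod.fst_add, Prod.snd_add, Pi.add_apply, add_smul, Finset.sum_add_distrib]
    abel
  map_smul' c v := by
    simp only [Prod.smul_fst, Prod.smul_snd, Pi.smul_apply, smul_eq_mul,
      RingHom.id_apply, Finset.smul_sum, smul_add, smul_smul]

lemma lieXY' (n k : ℕ) (i j : Fin n) :
    exX n k ((i : ℕ) + 1) * exY n (n - (j : ℕ)) - exY n (n - (j : ℕ)) * exX n k ((i : ℕ) + 1) =
      if i = j then exT n else 0 := by
  have hj := j.isLt
  have hi := i.isLt
  rw [brXY n k ((i : ℕ) + 1) (n - (j : ℕ)) (by omega) (by omega) (by omega) (by omega)]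
  by_cases h : i = j
  · subst h; rw [if_pos (by omega), if_pos rfl]
  · have h' : (i : ℕ) ≠ (j : ℕ) := fun hh => h (Fin.ext hh)
    rw [if_neg (by omega), if_neg h]

lemma lieYX' (n k : ℕ) (i j : Fin n) :
    exY n (n - (i : ℕ)) * exX n k ((j : ℕ) + 1) - exX n k ((j : ℕ) + 1) * exY n (n - (i : ℕ)) =
      if i = j then -exT n else 0 := by
  have h := lieXY' n k j i
  have h2 : exY n (n - (i:ℕ)) * exX n k ((j:ℕ)+1) - exX n k ((j:ℕ)+1) * exY n (n - (i:ℕ))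
      = -(exX n k ((j:ℕ)+1) * exY n (n - (i:ℕ)) - exY n (n - (i:ℕ)) * exX n k ((j:ℕ)+1)) := by
    abel
  rw [h2, h]
  by_cases hij : i = j
  · subst hij; rw [if_pos rfl, if_pos rfl]
  · rw [if_neg (fun hh => hij hh.symm), if_neg hij, neg_zero]

section comm
variable {M : Type*} [Ring M] {ι κ : Type*}

lemma comm_add3 (x y z x' y' z' : M) :
    (x + y + z) * (x' + y' + z') - (x' + y' + z') * (x + y + z) =
      (x * x' - x' * x) + (x * y' - y' * x) + (x * z' - z' * x) +
      ((y * x' - x' * y) + (y * y' - y' * y) + (y * z' - z' * y)) +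
      ((z * x' - x' * z) + (z * y' - y' * z) + (z * z' - z' * z)) := by
  noncomm_ring

variable [Algebra ℂ M]

lemma comm_sum_sum (s : Finset ι) (t : Finset κ)
    (f : ι → M) (g : κ → M) (cf : ι → ℂ) (cg : κ → ℂ) :
    (∑ i ∈ s, cf i • f i) * (∑ j ∈ t, cg j • g j)
      - (∑ j ∈ t, cg j • g j) * (∑ i ∈ s, cf i • f i)
      = ∑ i ∈ s, ∑ j ∈ t, (cf i * cg j) • (f i * g j - g j * f i) := by
  simp only [Finset.sum_mul, Finset.mul_sum, smul_mul_assoc, mul_smul_comm, smul_smul,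
    Finset.smul_sum]
  rw [Finset.sum_comm (s := t) (t := s), ← Finset.sum_sub_distrib]
  refine Finset.sum_congr rfl fun i _ => ?_
  rw [← Finset.sum_sub_distrib]
  refine Finset.sum_congr rfl fun j _ => ?_
  rw [smul_sub, mul_comm (cg j) (cf i)]

lemma comm_sum_smul (s : Finset ι) (f : ι → M) (cf : ι → ℂ) (c : ℂ) (g : M) :
    (∑ i ∈ s, cf i • f i) * (c • g) - (c • g) * (∑ i ∈ s, cf i • f i)
      = ∑ i ∈ s, (cf i * c) • (f i * g - g * f i) := by
  simp only [Finset.sum_mul, Finset.mul_sum, smul_mul_assoc, mul_smul_comm, smul_smul,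
    Finset.smul_sum]
  rw [← Finset.sum_sub_distrib]
  refine Finset.sum_congr rfl fun i _ => ?_
  rw [smul_sub, mul_comm c (cf i)]

lemma comm_smul_sum (s : Finset ι) (f : ι → M) (cf : ι → ℂ) (c : ℂ) (g : M) :
    (c • g) * (∑ i ∈ s, cf i • f i) - (∑ i ∈ s, cf i • f i) * (c • g)
      = ∑ i ∈ s, (c * cf i) • (g * f i - f i * g) := by
  simp only [Finset.sum_mul, Finset.mul_sum, smul_mul_assoc, mul_smul_comm, smul_smul,
    Finset.smul_sum]
  rw [← Finset.sum_sub_distrib]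
  refine Finset.sum_congr rfl fun i _ => ?_
  rw [smul_sub, mul_comm c (cf i)]

lemma comm_smul_smul (c d : ℂ) (f g : M) :
    (c • f) * (d • g) - (d • g) * (c • f) = (c * d) • (f * g - g * f) := by
  simp only [smul_mul_assoc, mul_smul_comm, smul_smul, smul_sub, mul_comm d c]

end comm

lemma phi_bracket (n k : ℕ) (a b : (Fin n → ℂ) × (Fin n → ℂ) × ℂ) :
    phiMat n k a * phiMat n k b - phiMat n k b * phiMat n k a =
      (∑ i : Fin n, (a.1 i * b.2.1 i - a.2.1 i * b.1 i)) • exT n := by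
  simp only [phiMat, LinearMap.coe_mk, AddHom.coe_mk]
  rw [comm_add3, comm_sum_sum, comm_sum_sum, comm_sum_sum, comm_sum_sum,
    comm_sum_smul, comm_sum_smul, comm_smul_sum, comm_smul_sum, comm_smul_smul]
  have hXX : ∀ i j : Fin n, exX n k ((i:ℕ)+1) * exX n k ((j:ℕ)+1)
      - exX n k ((j:ℕ)+1) * exX n k ((i:ℕ)+1) = 0 := fun i j =>
    brXX n k _ _ (by omega) (by have := i.isLt; omega) (by omega) (by have := j.isLt; omega)
  have hYY : ∀ i j : Fin n, exY n (n - (i:ℕ)) * exY n (n - (j:ℕ))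
      - exY n (n - (j:ℕ)) * exY n (n - (i:ℕ)) = 0 := fun i j =>
    brYY n _ _ (by have := i.isLt; omega) (by omega) (by have := j.isLt; omega) (by omega)
  have hXT : ∀ i : Fin n, exX n k ((i:ℕ)+1) * exT n - exT n * exX n k ((i:ℕ)+1) = 0 :=
    fun i => brXT n k _ (by omega) (by have := i.isLt; omega)
  have hYT : ∀ i : Fin n, exY n (n - (i:ℕ)) * exT n - exT n * exY n (n - (i:ℕ)) = 0 :=
    fun i => brYT n _ (by have := i.isLt; omega) (by omega)
  have hTX : ∀ i : Fin n, exT n * exX n k ((i:ℕ)+1) - exX n k ((i:ℕ)+1) * exT n = 0 := by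
    intro i; have := hXT i; rw [sub_eq_zero] at this ⊢; exact this.symm
  have hTY : ∀ i : Fin n, exT n * exY n (n - (i:ℕ)) - exY n (n - (i:ℕ)) * exT n = 0 := by
    intro i; have := hYT i; rw [sub_eq_zero] at this ⊢; exact this.symm
  simp only [hXX, hYY, hXT, hYT, hTX, hTY, lieXY' n k, lieYX' n k, sub_self, smul_zero,
    Finset.sum_const_zero, add_zero, zero_add, smul_ite, smul_neg,
    Finset.sum_ite_eq, Finset.mem_univ, ite_true]
  rw [Finset.sum_smul, ← Finset.sum_add_distrib]
  refine Finset.sum_congr rfl fun i _ => ?_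
  rw [sub_smul]
  abel

lemma exX_row0 (n k i : ℕ) (hi : 1 ≤ i) (p q : Fin (2 * n + 2)) (hp : (p : ℕ) = 0) :
    exX n k i p q = if (q : ℕ) + 1 = i + 1 then 1 else 0 := by
  unfold exX
  by_cases h1 : i ≤ k
  · rw [if_pos h1]
    simp only [Matrix.add_apply, Emat, hp, true_and, false_and, and_true, and_false]
    split_ifs
    all_goals try rfl
    all_goals try ring1
    all_goals (exfalso; omega)
  · rw [if_neg h1]
    simp only [Emat, hp, true_and, false_and, and_true, and_false]
    try split_ifs
    all_goals try rfl
    all_goals (exfalso; omega)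

lemma exY_row0 (n i : ℕ) (p q : Fin (2 * n + 2)) (hp : (p : ℕ) = 0) :
    exY n i p q = if (q : ℕ) + 1 = n + i + 1 then 1 else 0 := by
  unfold exY
  simp only [Matrix.add_apply, Emat, hp, true_and, false_and, and_true, and_false]
  try split_ifs
  all_goals try rfl
  all_goals try ring1
  all_goals (exfalso; omega)

lemma exT_row0 (n : ℕ) (p q : Fin (2 * n + 2)) (hp : (p : ℕ) = 0) :
    exT n p q = if (q : ℕ) + 1 = 2 * n + 2 then 1 else 0 := by
  unfold exT Emat
  simp only [hp, true_and, false_and, and_true, and_false]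
  try split_ifs
  all_goals try rfl
  all_goals (exfalso; omega)

lemma phi_row0 (n k : ℕ) (v : (Fin n → ℂ) × (Fin n → ℂ) × ℂ) (p q : Fin (2 * n + 2))
    (hp : (p : ℕ) = 0) :
    phiMat n k v p q =
      (∑ j : Fin n, v.1 j * (if (q : ℕ) = (j : ℕ) + 1 then 1 else 0)) +
      (∑ j : Fin n, v.2.1 j * (if (q : ℕ) = 2 * n - (j : ℕ) then 1 else 0)) +
      v.2.2 * (if (q : ℕ) = 2 * n + 1 then 1 else 0) := by
  simp only [phiMat, LinearMap.coe_mk, AddHom.coe_mk, Matrix.add_apply, Matrix.sum_apply,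
    Matrix.smul_apply, smul_eq_mul]
  rw [exT_row0 n p q hp]
  congr 2
  · refine Finset.sum_congr rfl fun j _ => ?_
    rw [exX_row0 n k ((j : ℕ) + 1) (by omega) p q hp]
    congr 1
    exact if_congr (by omega) rfl rfl
  · refine Finset.sum_congr rfl fun j _ => ?_
    rw [exY_row0 n (n - (j : ℕ)) p q hp]
    congr 1
    have := j.isLt
    exact if_congr (by omega) rfl rfl
  · have hc : (((q:ℕ) + 1 = 2*n+2)) = (((q:ℕ) = 2*n+1)) :=
      propext ⟨fun h => by omega, fun h => by omega⟩
    exact if_congr (iff_of_eq hc) rfl rfl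

lemma phi_entryX (n k : ℕ) (v : (Fin n → ℂ) × (Fin n → ℂ) × ℂ) (i : Fin n) :
    phiMat n k v ⟨0, by omega⟩ ⟨(i : ℕ) + 1, by have := i.isLt; omega⟩ = v.1 i := by
  have hi := i.isLt
  rw [phi_row0 n k v _ _ rfl]
  rw [Finset.sum_eq_single i (fun j _ hj => by
      have : (i : ℕ) ≠ (j : ℕ) := fun hh => hj (Fin.ext hh).symm
      simp only [Fin.val_mk]
      rw [if_neg (by omega), mul_zero]) (by simp)]
  rw [Finset.sum_eq_zero (fun j _ => by
      have := j.isLt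
      simp only [Fin.val_mk]
      rw [if_neg (by omega), mul_zero])]
  try simp only [Fin.val_mk]
  split_ifs
  all_goals try ring1
  all_goals (exfalso; omega)

lemma phi_entryY (n k : ℕ) (v : (Fin n → ℂ) × (Fin n → ℂ) × ℂ) (i : Fin n) :
    phiMat n k v ⟨0, by omega⟩ ⟨2 * n - (i : ℕ), by have := i.isLt; omega⟩ = v.2.1 i := by
  have hi := i.isLt
  rw [phi_row0 n k v _ _ rfl]
  rw [Finset.sum_eq_zero (fun j _ => by
      have := j.isLt
      simp only [Fin.val_mk]
      rw [if_neg (by omega), mul_zero])]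
  rw [Finset.sum_eq_single i (fun j _ hj => by
      have hj' : (i : ℕ) ≠ (j : ℕ) := fun hh => hj (Fin.ext hh).symm
      have := j.isLt
      simp only [Fin.val_mk]
      rw [if_neg (by omega), mul_zero]) (by simp)]
  try simp only [Fin.val_mk]
  split_ifs
  all_goals try ring1
  all_goals (exfalso; omega)

lemma phi_entryT (n k : ℕ) (hn : 1 ≤ n) (v : (Fin n → ℂ) × (Fin n → ℂ) × ℂ) :
    phiMat n k v ⟨0, by omega⟩ ⟨2 * n + 1, by omega⟩ = v.2.2 := by
  rw [phi_row0 n k v _ _ rfl]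
  rw [Finset.sum_eq_zero (fun j _ => by
      have := j.isLt
      simp only [Fin.val_mk]
      rw [if_neg (by omega), mul_zero])]
  rw [Finset.sum_eq_zero (fun j _ => by
      have := j.isLt
      simp only [Fin.val_mk]
      rw [if_neg (by omega), mul_zero])]
  try simp only [Fin.val_mk]
  split_ifs
  all_goals try ring1
  all_goals (exfalso; omega)

lemma phi_inj (n k : ℕ) (hn : 1 ≤ n) : Function.Injective (phiMat n k) := by
  intro u v h
  refine Prod.ext (funext fun i => ?_) (Prod.ext (funext fun i => ?_) ?_)
  · rw [← phi_entryX n k u i, ← phi_entryX n k v i, h]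
  · rw [← phi_entryY n k u i, ← phi_entryY n k v i, h]
  · rw [← phi_entryT n k hn u, ← phi_entryT n k hn v, h]

lemma phi_range (n k : ℕ) (hn : 1 ≤ n) :
    LinearMap.range (phiMat n k) = Submodule.span ℂ
      ({exT n} ∪ (exX n k '' Set.Icc 1 n) ∪ (exY n '' Set.Icc 1 n)) := by
  apply le_antisymm
  · rintro x ⟨v, rfl⟩
    simp only [phiMat, LinearMap.coe_mk, AddHom.coe_mk]
    refine Submodule.add_mem _ (Submodule.add_mem _ ?_ ?_) ?_
    · exact Submodule.sum_mem _ fun i _ => Submodule.smul_mem _ _ (Submodule.subset_span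
        (Or.inl (Or.inr ⟨(i : ℕ) + 1, ⟨by omega, by have := i.isLt; omega⟩, rfl⟩)))
    · exact Submodule.sum_mem _ fun i _ => Submodule.smul_mem _ _ (Submodule.subset_span
        (Or.inr ⟨n - (i : ℕ), ⟨by have := i.isLt; omega, by omega⟩, rfl⟩))
    · exact Submodule.smul_mem _ _ (Submodule.subset_span (Or.inl (Or.inl rfl)))
  · rw [Submodule.span_le]
    rintro x ((rfl | ⟨i, ⟨hi1, hi2⟩, rfl⟩) | ⟨i, ⟨hi1, hi2⟩, rfl⟩)
    · refine ⟨(0, 0, 1), ?_⟩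
      simp [phiMat]
    · refine ⟨(Pi.single ⟨i - 1, by omega⟩ (1 : ℂ), 0, 0), ?_⟩
      simp only [phiMat, LinearMap.coe_mk, AddHom.coe_mk, Pi.single_apply, ite_smul,
        one_smul, zero_smul, Pi.zero_apply, Finset.sum_ite_eq', Finset.mem_univ, if_true,
        Finset.sum_const_zero, add_zero, zero_add, smul_zero]
      congr 1
      try simp only [Fin.val_mk]
      rw [show i - 1 + 1 = i by omega]
    · refine ⟨(0, Pi.single ⟨n - i, by omega⟩ (1 : ℂ), 0), ?_⟩
      simp only [phiMat, LinearMap.coe_mk, AddHom.coe_mk, Pi.single_apply, ite_smul,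
        one_smul, zero_smul, Pi.zero_apply, Finset.sum_ite_eq', Finset.mem_univ, if_true,
        Finset.sum_const_zero, add_zero, zero_add, smul_zero]
      congr 1
      try simp only [Fin.val_mk]
      rw [show n - (n - i) = i by omega]

/-- For `1 ≤ n` and `0 ≤ k ≤ n`, the `2n+1` matrices
`X₁,…,X_n, Y₁,…,Y_n, t` of Example 1 span a Lie subalgebra (under the matrix
commutator) of `Mat_{2n+2}(ℂ)` isomorphic to the Heisenberg Lie algebra
`h_{2n+1}`: the nontrivial brackets pair each `X_i` with exactly one `Y_j`
(namely `j = n+1-i`), all other brackets of basis elements vanish, `t` is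
central, the span has dimension `2n+1`, and it is isomorphic (by a linear
equivalence matching brackets) to the abstract Heisenberg Lie algebra on
`(Fin n → ℂ) × (Fin n → ℂ) × ℂ`. -/
theorem example_heisenberg_subalgebra (n k : ℕ) (hn : 1 ≤ n) (hk : k ≤ n) :
    (∀ i ∈ Set.Icc 1 n, ∀ j ∈ Set.Icc 1 n,
      exX n k i * exY n j - exY n j * exX n k i =
        if i + j = n + 1 then exT n else 0) ∧
    (∀ i ∈ Set.Icc 1 n, ∀ j ∈ Set.Icc 1 n,
      exX n k i * exX n k j - exX n k j * exX n k i = 0) ∧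
    (∀ i ∈ Set.Icc 1 n, ∀ j ∈ Set.Icc 1 n,
      exY n i * exY n j - exY n j * exY n i = 0) ∧
    (∀ i ∈ Set.Icc 1 n,
      exX n k i * exT n - exT n * exX n k i = 0 ∧
      exY n i * exT n - exT n * exY n i = 0) ∧
    Module.finrank ℂ
      ↥(Submodule.span ℂ
        ({exT n} ∪ (exX n k '' Set.Icc 1 n) ∪ (exY n '' Set.Icc 1 n))) = 2 * n + 1 ∧
    ∃ e : ((Fin n → ℂ) × (Fin n → ℂ) × ℂ) ≃ₗ[ℂ]
        ↥(Submodule.span ℂ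
          ({exT n} ∪ (exX n k '' Set.Icc 1 n) ∪ (exY n '' Set.Icc 1 n))),
      ∀ a b : (Fin n → ℂ) × (Fin n → ℂ) × ℂ,
        ((e a : Matrix (Fin (2 * n + 2)) (Fin (2 * n + 2)) ℂ) * (e b : Matrix _ _ ℂ) -
            (e b : Matrix _ _ ℂ) * (e a : Matrix _ _ ℂ)) =
          (e (0, 0, ∑ i : Fin n, (a.1 i * b.2.1 i - a.2.1 i * b.1 i)) : Matrix _ _ ℂ) := by
  let e := (LinearEquiv.ofInjective (phiMat n k) (phi_inj n k hn)).trans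
    (LinearEquiv.ofEq _ _ (phi_range n k hn))
  have hcoe : ∀ a, ((e a : Submodule.span ℂ
      ({exT n} ∪ (exX n k '' Set.Icc 1 n) ∪ (exY n '' Set.Icc 1 n))) :
      Matrix (Fin (2 * n + 2)) (Fin (2 * n + 2)) ℂ) = phiMat n k a := fun a => by
    simp only [e, LinearEquiv.trans_apply, LinearEquiv.coe_ofEq_apply,
      LinearEquiv.ofInjective_apply]
  refine ⟨fun i hi j hj => brXY n k i j hi.1 hi.2 hj.1 hj.2,
    fun i hi j hj => brXX n k i j hi.1 hi.2 hj.1 hj.2,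
    fun i hi j hj => brYY n i j hi.1 hi.2 hj.1 hj.2,
    fun i hi => ⟨brXT n k i hi.1 hi.2, brYT n i hi.1 hi.2⟩, ?_, e, fun a b => ?_⟩
  · rw [← LinearEquiv.finrank_eq e]
    simp only [Module.finrank_prod, Module.finrank_pi, Module.finrank_self,
      Fintype.card_fin]
    omega
  · rw [hcoe, hcoe, hcoe, phi_bracket]
    simp [phiMat]
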